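/- Let λ, μ, c > 0 with μ/λ < c, and let x : [0,∞) → ℝ be differentiable with x'(t) = λ x(t)² − (λc + μ) x(t) + μc for all t ≥ 0. If x(0) ∈ [0, c) then x(t) → μ/λ as t → ∞; if x(0) = c then x(t) = c for all t ≥ 0. -/

import Mathlib

open Set Filter


lemma gron_eq {y G : ℝ → ℝ} {e s t : ℝ} (hst : s ≤ t)
    (hy : ∀ u ∈ Icc s t, HasDerivAt y (G u * (y u - e)) u)
    (hG : ContinuousOn G (Icc s t)) (hys : y s = e) : y t = e := by
  have hcont : ContinuousOn y (Icc s t) := fun u hu =>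
    ((hy u hu).continuousAt).continuousWithinAt
  obtain ⟨K, hK⟩ := isCompact_Icc.exists_bound_of_continuousOn hG
  have key := norm_le_gronwallBound_of_norm_deriv_right_le
    (f := fun u => y u - e) (f' := fun u => G u * (y u - e))
    (δ := 0) (K := K) (ε := 0) (a := s) (b := t)
    (hcont.sub continuousOn_const)
    (fun u hu => ((hy u (Ico_subset_Icc_self hu)).sub_const e).hasDerivWithinAt)
    (by simp [hys])
    (fun u hu => by
      have h1 := hK u (Ico_subset_Icc_self hu)
      have h2 : ‖G u * (y u - e)‖ = ‖G u‖ * ‖y u - e‖ := norm_mul _ _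
      nlinarith [norm_nonneg (y u - e), norm_nonneg (G u)])
  have h3 := key t (right_mem_Icc.2 hst)
  rw [gronwallBound_ε0] at h3
  simp only [zero_mul] at h3
  have h4 : ‖y t - e‖ ≤ 0 := h3
  linarith [sub_eq_zero.1 (norm_le_zero_iff.1 h4)]

lemma no_cross_fwd {lam a c : ℝ} {x : ℝ → ℝ}
    (hx : ∀ t ≥ (0:ℝ), HasDerivAt x (lam * (x t - a) * (x t - c)) t)
    {e : ℝ} (he : (e - a) * (e - c) = 0)
    {s t : ℝ} (hs : 0 ≤ s) (hst : s ≤ t) (hse : x s = e) : x t = e := by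
  refine gron_eq (G := fun u => lam * (x u + e - a - c)) hst ?_ ?_ hse
  · intro u hu
    have h1 := hx u (hs.trans hu.1)
    have h2 : lam * (x u - a) * (x u - c) = lam * (x u + e - a - c) * (x u - e) := by
      linear_combination lam * he
    exact h2 ▸ h1
  · have hcx : ContinuousOn x (Icc s t) := fun u hu =>
      ((hx u (hs.trans hu.1)).continuousAt).continuousWithinAt
    exact continuousOn_const.mul (((hcx.add continuousOn_const).sub continuousOn_const).sub
      continuousOn_const)

lemma no_cross_bwd {lam a c : ℝ} {x : ℝ → ℝ}
    (hx : ∀ t ≥ (0:ℝ), HasDerivAt x (lam * (x t - a) * (x t - c)) t)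
    {e : ℝ} (he : (e - a) * (e - c) = 0)
    {s t : ℝ} (hs : 0 ≤ s) (hst : s ≤ t) (hte : x t = e) : x s = e := by
  have hmem : ∀ u ∈ Icc s t, s + t - u ∈ Icc s t := fun u hu =>
    ⟨by linarith [hu.2], by linarith [hu.1]⟩
  have hy : ∀ u ∈ Icc s t, HasDerivAt (fun u => x (s + t - u))
      ((-(lam * (x (s + t - u) + e - a - c))) * (x (s + t - u) - e)) u := by
    intro u hu
    have hw := hmem u hu
    have h1 := hx (s + t - u) (hs.trans hw.1)
    have h2 : HasDerivAt (fun u : ℝ => s + t - u) (-1) u := (hasDerivAt_id u).const_sub (s + t)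
    have h3 : HasDerivAt (fun u => x (s + t - u))
        (lam * (x (s + t - u) - a) * (x (s + t - u) - c) * (-1)) u := h1.comp u h2
    convert h3 using 1
    linear_combination lam * he
  have hcx : ContinuousOn x (Icc s t) := fun u hu =>
    ((hx u (hs.trans hu.1)).continuousAt).continuousWithinAt
  have h5 : ContinuousOn (fun u => x (s + t - u)) (Icc s t) :=
    hcx.comp ((continuous_const.sub continuous_id).continuousOn) hmem
  have hGcont : ContinuousOn (fun u => -(lam * (x (s + t - u) + e - a - c))) (Icc s t) :=
    (continuousOn_const.mul (((h5.add continuousOn_const).sub continuousOn_const).sub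
      continuousOn_const)).neg
  have hys : (fun u => x (s + t - u)) s = e := by
    show x (s + t - s) = e
    rw [show s + t - s = t by ring]; exact hte
  have key : (fun u => x (s + t - u)) t = e :=
    gron_eq (y := fun u => x (s + t - u))
      (G := fun u => -(lam * (x (s + t - u) + e - a - c))) hst hy hGcont hys
  have : x (s + t - t) = e := key
  rwa [show s + t - t = s by ring] at this

/-- Case 1 of Theorem 3.1: when `μ/λ < c`, every solution of
`x' = λ x² − (λc + μ) x + μc` starting in `[0, c)` converges to `μ/λ`,
and the solution starting at `c` stays at `c`. -/
theorem stmt_3 (lam mu c : ℝ) (hlam : 0 < lam) (hmu : 0 < mu) (hc : 0 < c)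
    (hcase : mu / lam < c)
    (x : ℝ → ℝ)
    (hx : ∀ t ≥ (0 : ℝ),
      HasDerivAt x (lam * x t ^ 2 - (lam * c + mu) * x t + mu * c) t) :
    (x 0 ∈ Ico (0 : ℝ) c → Tendsto x atTop (nhds (mu / lam))) ∧
    (x 0 = c → ∀ t ≥ (0 : ℝ), x t = c) := by
  set a : ℝ := mu / lam with ha_def
  have hlam' : lam ≠ 0 := ne_of_gt hlam
  have hma : lam * a = mu := by rw [ha_def]; field_simp
  have ha0 : 0 < a := div_pos hmu hlam
  have hx' : ∀ t ≥ (0 : ℝ), HasDerivAt x (lam * (x t - a) * (x t - c)) t := by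
    intro t ht
    have h := hx t ht
    have he : lam * x t ^ 2 - (lam * c + mu) * x t + mu * c
        = lam * (x t - a) * (x t - c) := by
      linear_combination (x t - c) * hma
    exact he ▸ h
  have hea : (a - a) * (a - c) = 0 := by ring
  have hec : (c - a) * (c - c) = 0 := by ring
  have hcontx : ∀ {T : ℝ}, ContinuousOn x (Icc 0 T) := fun {T} => fun u hu =>
    ((hx' u hu.1).continuousAt).continuousWithinAt
  constructor
  · rintro ⟨h00, h0c⟩
    -- x stays below c
    have hxc : ∀ t ≥ (0:ℝ), x t < c := by
      intro t ht
      by_contra h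
      push_neg at h
      obtain ⟨u, hu, hxu⟩ := intermediate_value_Icc ht hcontx ⟨h0c.le, h⟩
      exact absurd (no_cross_bwd hx' hec le_rfl hu.1 hxu) (ne_of_lt h0c)
    rcases lt_trichotomy (x 0) a with hlt | heq | hgt
    · -- case x 0 < a : monotone increase to a
      have hxa : ∀ t ≥ (0:ℝ), x t < a := by
        intro t ht
        by_contra h
        push_neg at h
        obtain ⟨u, hu, hxu⟩ := intermediate_value_Icc ht hcontx ⟨hlt.le, h⟩
        exact absurd (no_cross_bwd hx' hea le_rfl hu.1 hxu) (ne_of_lt hlt)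
      have hmono : MonotoneOn x (Ici (0:ℝ)) := by
        refine monotoneOn_of_deriv_nonneg (convex_Ici 0)
          (fun u hu => ((hx' u hu).continuousAt).continuousWithinAt) ?_ ?_
        · intro u hu
          rw [interior_Ici] at hu
          exact ((hx' u (le_of_lt hu)).differentiableAt).differentiableWithinAt
        · intro u hu
          rw [interior_Ici] at hu
          rw [(hx' u (le_of_lt hu)).deriv]
          have h1 : 0 < a - x u := by linarith [hxa u (le_of_lt hu)]
          have h2 : 0 < c - x u := by linarith [hxc u (le_of_lt hu)]
          nlinarith [mul_pos hlam (mul_pos h1 h2)]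
      rw [Metric.tendsto_atTop]
      intro ε hε
      have key : ∃ t₀ ≥ (0:ℝ), a - ε < x t₀ := by
        by_contra h
        push_neg at h
        set δ : ℝ := lam * ε * (c - a) with hδ_def
        have hδ : 0 < δ := by
          apply mul_pos (mul_pos hlam hε); linarith
        have hanti2 : MonotoneOn (fun t => x t - δ * t) (Ici (0:ℝ)) := by
          refine monotoneOn_of_deriv_nonneg (convex_Ici 0)
            (fun u hu => (((hx' u hu).continuousAt).sub (by fun_prop)).continuousWithinAt) ?_ ?_
          · intro u hu
            rw [interior_Ici] at hu
            have hδt : HasDerivAt (fun t : ℝ => δ * t) δ u := by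
              simpa using (hasDerivAt_id u).const_mul δ
            exact (((hx' u (le_of_lt hu)).sub hδt).differentiableAt).differentiableWithinAt
          · intro u hu
            rw [interior_Ici] at hu
            have hδt : HasDerivAt (fun t : ℝ => δ * t) δ u := by
              simpa using (hasDerivAt_id u).const_mul δ
            have hd : HasDerivAt (fun t => x t - δ * t) (lam * (x u - a) * (x u - c) - δ) u :=
              (hx' u (le_of_lt hu)).sub hδt
            rw [hd.deriv]
            have h1 := h u (le_of_lt hu)
            have h2 := hxc u (le_of_lt hu)
            have hεa : ε ≤ a - x u := by linarith
            have hca : c - a ≤ c - x u := by linarith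
            have : δ ≤ lam * (a - x u) * (c - x u) := by
              rw [hδ_def]
              have := mul_le_mul hεa hca (by linarith) (by linarith)
              nlinarith
            nlinarith
        set T : ℝ := (a - x 0) / δ + 1 with hT_def
        have hT : 0 ≤ T := by
          rw [hT_def]
          have : 0 ≤ (a - x 0) / δ := div_nonneg (by linarith) hδ.le
          linarith
        have hmonoT := hanti2 (self_mem_Ici) hT hT
        simp only [mul_zero, sub_zero] at hmonoT
        have hδT : δ * T = (a - x 0) + δ := by
          rw [hT_def]; field_simp
        linarith [hxa T hT]
      obtain ⟨t₀, ht₀, hxt₀⟩ := key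
      refine ⟨t₀, fun n hn => ?_⟩
      have hn0 : (0:ℝ) ≤ n := le_trans ht₀ hn
      have h1 : x t₀ ≤ x n := hmono ht₀ hn0 hn
      have h2 := hxa n hn0
      rw [Real.dist_eq, abs_lt]
      constructor <;> linarith
    · -- case x 0 = a : constant
      have : ∀ t ≥ (0:ℝ), x t = a := fun t ht => no_cross_fwd hx' hea le_rfl ht heq
      have : ∀ᶠ t in atTop, x t = a := (eventually_ge_atTop (0:ℝ)).mono this
      exact Tendsto.congr' (this.mono fun t ht => ht.symm) tendsto_const_nhds
    · -- case a < x 0 : decreasing to a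
      have hxa : ∀ t ≥ (0:ℝ), a < x t := by
        intro t ht
        by_contra h
        push_neg at h
        obtain ⟨u, hu, hxu⟩ := intermediate_value_Icc' ht hcontx ⟨h, hgt.le⟩
        exact absurd (no_cross_bwd hx' hea le_rfl hu.1 hxu) (ne_of_gt hgt)
      have hanti : AntitoneOn x (Ici (0:ℝ)) := by
        refine antitoneOn_of_deriv_nonpos (convex_Ici 0)
          (fun u hu => ((hx' u hu).continuousAt).continuousWithinAt) ?_ ?_
        · intro u hu
          rw [interior_Ici] at hu
          exact ((hx' u (le_of_lt hu)).differentiableAt).differentiableWithinAt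
        · intro u hu
          rw [interior_Ici] at hu
          rw [(hx' u (le_of_lt hu)).deriv]
          have h1 : 0 < x u - a := by linarith [hxa u (le_of_lt hu)]
          have h2 : 0 < c - x u := by linarith [hxc u (le_of_lt hu)]
          nlinarith [mul_pos hlam (mul_pos h1 h2)]
      rw [Metric.tendsto_atTop]
      intro ε hε
      have key : ∃ t₀ ≥ (0:ℝ), x t₀ < a + ε := by
        by_contra h
        push_neg at h
        set δ : ℝ := lam * ε * (c - x 0) with hδ_def
        have hδ : 0 < δ := by
          apply mul_pos (mul_pos hlam hε); linarith
        have hanti2 : AntitoneOn (fun t => x t + δ * t) (Ici (0:ℝ)) := by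
          refine antitoneOn_of_deriv_nonpos (convex_Ici 0)
            (fun u hu => (((hx' u hu).continuousAt).add (by fun_prop)).continuousWithinAt) ?_ ?_
          · intro u hu
            rw [interior_Ici] at hu
            have hδt : HasDerivAt (fun t : ℝ => δ * t) δ u := by
              simpa using (hasDerivAt_id u).const_mul δ
            exact (((hx' u (le_of_lt hu)).add hδt).differentiableAt).differentiableWithinAt
          · intro u hu
            rw [interior_Ici] at hu
            have hδt : HasDerivAt (fun t : ℝ => δ * t) δ u := by
              simpa using (hasDerivAt_id u).const_mul δ
            have hd : HasDerivAt (fun t => x t + δ * t) (lam * (x u - a) * (x u - c) + δ) u :=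
              (hx' u (le_of_lt hu)).add hδt
            rw [hd.deriv]
            have h1 := h u (le_of_lt hu)
            have h2 := hxc u (le_of_lt hu)
            have h3 : x u ≤ x 0 := hanti self_mem_Ici (le_of_lt hu : (0:ℝ) ≤ u) (le_of_lt hu)
            have hεa : ε ≤ x u - a := by linarith
            have hca : c - x 0 ≤ c - x u := by linarith
            have : δ ≤ lam * (x u - a) * (c - x u) := by
              rw [hδ_def]
              have := mul_le_mul hεa hca (by linarith) (by linarith)
              nlinarith
            nlinarith
        set T : ℝ := (x 0 - a) / δ + 1 with hT_def
        have hT : 0 ≤ T := by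
          rw [hT_def]
          have : 0 ≤ (x 0 - a) / δ := div_nonneg (by linarith) hδ.le
          linarith
        have hδT : δ * T = (x 0 - a) + δ := by
          rw [hT_def]; field_simp
        have hantiT := hanti2 self_mem_Ici hT hT
        simp only [mul_zero, add_zero] at hantiT
        linarith [h T hT]
      obtain ⟨t₀, ht₀, hxt₀⟩ := key
      refine ⟨t₀, fun n hn => ?_⟩
      have hn0 : (0:ℝ) ≤ n := le_trans ht₀ hn
      have h1 : x n ≤ x t₀ := hanti ht₀ hn0 hn
      have h2 := hxa n hn0
      rw [Real.dist_eq, abs_lt]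
      constructor <;> linarith
  · intro h0 t ht
    exact no_cross_fwd hx' hec le_rfl ht h0
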